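/- Let Γ₁ and Γ₂ be groups, φ : Γ₁ → Γ₂ a group homomorphism, E₁ a Γ₁-set, and E₂ and V two Γ₂-sets, and let κ : E₁ → E₂ satisfy κ(γ•z) = φ(γ)•κ(z) for all γ ∈ Γ₁, z ∈ E₁. Assume moreover that: (i) the action of Γ₂ on E₂ is free; (ii) whenever κ(z₂) lies in the Γ₂-orbit of κ(z₁) (for z₁, z₂ ∈ E₁), z₂ lies in the Γ₁-orbit of z₁; and (iii) every Γ₂-orbit in E₂ contains a point of the range of κ. Let Γ₁ act on E₁ × V by γ•(z, v) = (γ•z, φ(γ)•v) and Γ₂ act on E₂ × V diagonally. Then the induced map Ψ : (E₁ × V)/Γ₁ → (E₂ × V)/Γ₂, [ (z, v) ] ↦ [ (κ(z), v) ], is a bijection. -/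
import Mathlib


/-- The equivalence relation on `E₁ × V` generated by the action
`γ • (z, v) = (γ • z, φ γ • v)` of `Γ₁` (orbit equivalence). -/
def twistedOrbitRel {Γ₁ Γ₂ : Type*} [Group Γ₁] [Group Γ₂] (φ : Γ₁ →* Γ₂)
    (E₁ V : Type*) [MulAction Γ₁ E₁] [MulAction Γ₂ V] : Setoid (E₁ × V) where
  r p q := ∃ γ : Γ₁, q.1 = γ • p.1 ∧ q.2 = φ γ • p.2
  iseqv := by
    constructor
    · intro p; exact ⟨1, by simp⟩
    · rintro p q ⟨γ, h1, h2⟩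
      exact ⟨γ⁻¹, by simp [h1, h2]⟩
    · rintro p q r ⟨γ, h1, h2⟩ ⟨δ, h3, h4⟩
      exact ⟨δ * γ, by simp [h1, h2, h3, h4, mul_smul]⟩

/-- The orbit equivalence relation on `E₂ × V` for the diagonal action of `Γ₂`. -/
def diagOrbitRel (Γ₂ E₂ V : Type*) [Group Γ₂] [MulAction Γ₂ E₂] [MulAction Γ₂ V] :
    Setoid (E₂ × V) where
  r p q := ∃ γ : Γ₂, q.1 = γ • p.1 ∧ q.2 = γ • p.2
  iseqv := by
    constructor
    · intro p; exact ⟨1, by simp⟩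
    · rintro p q ⟨γ, h1, h2⟩
      exact ⟨γ⁻¹, by simp [h1, h2]⟩
    · rintro p q r ⟨γ, h1, h2⟩ ⟨δ, h3, h4⟩
      exact ⟨δ * γ, by simp [h1, h2, h3, h4, mul_smul]⟩

/-- With `κ : E₁ → E₂` equivariant along `φ : Γ₁ → Γ₂`, if moreover
(i) the `Γ₂`-action on `E₂` is free, (ii) fibers of `κ` over `Γ₂`-orbits are contained
in `Γ₁`-orbits, and (iii) every `Γ₂`-orbit in `E₂` meets the range of `κ`, then the
induced map `Ψ : (E₁ × V)/Γ₁ → (E₂ × V)/Γ₂`, `[(z,v)] ↦ [(κ z, v)]`, is a bijection. -/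
theorem descend_to_orbit_spaces_bijective {Γ₁ Γ₂ E₁ E₂ V : Type*} [Group Γ₁] [Group Γ₂]
    [MulAction Γ₁ E₁] [MulAction Γ₂ E₂] [MulAction Γ₂ V]
    (φ : Γ₁ →* Γ₂) (κ : E₁ → E₂)
    (hκ : ∀ (γ : Γ₁) (z : E₁), κ (γ • z) = φ γ • κ z)
    (hfree : ∀ (γ : Γ₂) (y : E₂), γ • y = y → γ = 1)
    (hfib : ∀ z₁ z₂ : E₁, (∃ γ₂ : Γ₂, κ z₂ = γ₂ • κ z₁) → ∃ γ₁ : Γ₁, z₂ = γ₁ • z₁)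
    (hsurj : ∀ y : E₂, ∃ (γ : Γ₂) (z : E₁), y = γ • κ z)
    (Ψ : Quotient (twistedOrbitRel φ E₁ V) → Quotient (diagOrbitRel Γ₂ E₂ V))
    (hΨ : ∀ (z : E₁) (v : V),
      Ψ (Quotient.mk (twistedOrbitRel φ E₁ V) (z, v)) =
        Quotient.mk (diagOrbitRel Γ₂ E₂ V) (κ z, v)) :
    Function.Bijective Ψ := by
  constructor
  · intro a b hab
    induction a using Quotient.inductionOn with | h p =>
    induction b using Quotient.inductionOn with | h q =>
    obtain ⟨z₁, v₁⟩ := p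
    obtain ⟨z₂, v₂⟩ := q
    rw [hΨ, hΨ] at hab
    obtain ⟨γ₂, h1, h2⟩ := Quotient.exact hab
    simp only at h1 h2
    obtain ⟨γ₁, hz⟩ := hfib z₁ z₂ ⟨γ₂, h1⟩
    have hγ : γ₂ = φ γ₁ := by
      have : φ γ₁ • κ z₁ = γ₂ • κ z₁ := by rw [← hκ, ← hz, h1]
      have h := hfree (γ₂⁻¹ * φ γ₁) (κ z₁) (by rw [mul_smul, this, inv_smul_smul])
      rw [inv_mul_eq_one] at h
      exact h
    exact Quotient.sound ⟨γ₁, hz, by rw [h2, hγ]⟩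
  · intro b
    induction b using Quotient.inductionOn with | h q =>
    obtain ⟨y, v⟩ := q
    obtain ⟨γ, z, hy⟩ := hsurj y
    refine ⟨Quotient.mk _ (z, γ⁻¹ • v), ?_⟩
    rw [hΨ]
    exact Quotient.sound ⟨γ, hy, by simp⟩
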